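/- Let P(t) = √6√(2t²+2)/√(2t²+3) and Q(t) = t/(t²+1). The pair a(t) = 0, b(t) = 1/√(t²+1) solves the full invariant Spin(7) instanton system: da/dt = (P·a/t)(b - 1/P) and db/dt = (P/(2t))(1-b²) - (PQ/2)(1-a²) - Qb for all t > 0. -/

import Mathlib

/-- Metric coefficient `P(t) = √6·√(2t²+2)/√(2t²+3)`. -/
noncomputable def Pfun (t : ℝ) : ℝ := Real.sqrt 6 * Real.sqrt (2 * t ^ 2 + 2) / Real.sqrt (2 * t ^ 2 + 3)

/-- Metric coefficient `Q(t) = t/(t²+1)`. -/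
noncomputable def Qfun (t : ℝ) : ℝ := t / (t ^ 2 + 1)

/-- The pair `a(t) = 0`, `b(t) = 1/√(t²+1)` solves the full invariant Spin(7) instanton system
`da/dt = (Pa/t)(b - 1/P)`, `db/dt = (P/(2t))(1-b²) - (PQ/2)(1-a²) - Qb` for all `t > 0`.
This is the HYM connection `A_HYM_π₁`. -/
theorem hym_pi1_solves_spin7_system :
    ∀ t > (0 : ℝ),
      HasDerivAt (fun _ : ℝ => (0 : ℝ))
        (Pfun t * (0 : ℝ) / t * ((1 / Real.sqrt (t ^ 2 + 1)) - 1 / Pfun t)) t ∧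
      HasDerivAt (fun s : ℝ => 1 / Real.sqrt (s ^ 2 + 1))
        (Pfun t / (2 * t) * (1 - (1 / Real.sqrt (t ^ 2 + 1)) ^ 2) -
          Pfun t * Qfun t / 2 * (1 - (0 : ℝ) ^ 2) - Qfun t * (1 / Real.sqrt (t ^ 2 + 1))) t := by
  intro t ht
  have ht2 : (0 : ℝ) < t ^ 2 + 1 := by positivity
  have hs : Real.sqrt (t ^ 2 + 1) > 0 := Real.sqrt_pos.mpr ht2
  have hsq : Real.sqrt (t ^ 2 + 1) ^ 2 = t ^ 2 + 1 := Real.sq_sqrt ht2.le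
  constructor
  · simpa using (hasDerivAt_const t (0 : ℝ))
  · -- inner function s ↦ s^2 + 1
    have hinner : HasDerivAt (fun s : ℝ => s ^ 2 + 1) (2 * t) t := by
      simpa using ((hasDerivAt_pow 2 t).add_const 1)
    have hg : HasDerivAt (fun s : ℝ => Real.sqrt (s ^ 2 + 1))
        (2 * t / (2 * Real.sqrt (t ^ 2 + 1))) t := hinner.sqrt (by positivity)
    have hinv : HasDerivAt (fun s : ℝ => (Real.sqrt (s ^ 2 + 1))⁻¹)
        (-(2 * t / (2 * Real.sqrt (t ^ 2 + 1))) / (Real.sqrt (t ^ 2 + 1)) ^ 2) t :=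
      hg.inv hs.ne'
    have key : Pfun t / (2 * t) * (1 - (1 / Real.sqrt (t ^ 2 + 1)) ^ 2) -
          Pfun t * Qfun t / 2 * (1 - (0 : ℝ) ^ 2) - Qfun t * (1 / Real.sqrt (t ^ 2 + 1)) =
        -(2 * t / (2 * Real.sqrt (t ^ 2 + 1))) / (Real.sqrt (t ^ 2 + 1)) ^ 2 := by
      have h1 : Pfun t / (2 * t) * (1 - (1 / Real.sqrt (t ^ 2 + 1)) ^ 2) =
          Pfun t * Qfun t / 2 := by
        rw [Qfun]
        field_simp [hsq]
        linear_combination Pfun t * hsq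
      rw [h1, Qfun]
      field_simp [hsq]
      linear_combination (-2) * hsq
    rw [key]
    simpa [one_div] using hinv
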